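/- Let n ≥ 2 be an integer. For every continuously differentiable function φ : ℝ → ℝ with compact support, ∫₀^∞ φ'(t)²·sinh(t)^{n−1} dt ≥ ((n−1)²/4)·∫₀^∞ φ(t)²·sinh(t)^{n−1} dt. -/

import Mathlib

open Real Set MeasureTheory Filter

private lemma intg_aux (ψ g : ℝ → ℝ) (hψc : Continuous ψ) (hψs : HasCompactSupport ψ)
    (hg : Continuous g) : Integrable (fun t => ψ t * g t) :=
  (hψc.mul hg).integrable_of_hasCompactSupport (hψs.mul_right)

theorem radial_poincare_hyperbolic
    (n : ℕ) (hn : 2 ≤ n) (φ : ℝ → ℝ)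
    (hφ : ContDiff ℝ 1 φ) (hsupp : HasCompactSupport φ) :
    ((n : ℝ) - 1)^2 / 4 * ∫ t in Ioi (0:ℝ), (φ t)^2 * (sinh t)^(n - 1)
      ≤ ∫ t in Ioi (0:ℝ), (deriv φ t)^2 * (sinh t)^(n - 1) := by
  set m := n - 1 with hm'
  have hm1 : 1 ≤ m := by omega
  have hcast : ((n : ℝ) - 1) = (m : ℝ) := by
    rw [hm', Nat.cast_sub (by omega)]; norm_num
  have hmR : (1 : ℝ) ≤ (m : ℝ) := by exact_mod_cast hm1
  have hφc : Continuous φ := hφ.continuous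
  have hφ'c : Continuous (deriv φ) := hφ.continuous_deriv le_rfl
  have hφ's : HasCompactSupport (deriv φ) := hsupp.deriv
  have hsq : HasCompactSupport (fun t => φ t ^ 2) :=
    hsupp.comp_left (g := fun x => x ^ 2) (by simp)
  have h'sq : HasCompactSupport (fun t => deriv φ t ^ 2) :=
    hφ's.comp_left (g := fun x => x ^ 2) (by simp)
  -- integrabilities
  have hiA : Integrable (fun t => (φ t)^2 * (sinh t)^m) :=
    intg_aux _ _ (hφc.pow 2) hsq (Real.continuous_sinh.pow m)
  have hiB : Integrable (fun t => (deriv φ t)^2 * (sinh t)^m) :=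
    intg_aux _ _ (hφ'c.pow 2) h'sq (Real.continuous_sinh.pow m)
  have hiC : Integrable (fun t => (φ t)^2 * ((m : ℝ) * (sinh t)^(m-1) * cosh t)) :=
    intg_aux _ _ (hφc.pow 2) hsq
      ((continuous_const.mul (Real.continuous_sinh.pow (m-1))).mul Real.continuous_cosh)
  have hiX : Integrable (fun t => 2 * φ t * deriv φ t * (sinh t)^m) := by
    have := intg_aux φ (fun t => 2 * deriv φ t * (sinh t)^m) hφc hsupp
      ((continuous_const.mul hφ'c).mul (Real.continuous_sinh.pow m))
    exact this.congr (by
      apply Filter.Eventually.of_forall; intro t; ring)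
  -- derivative of F t = φ t ^ 2 * sinh t ^ m
  have hF : ∀ t : ℝ, HasDerivAt (fun t => (φ t)^2 * (sinh t)^m)
      (2 * φ t * deriv φ t * (sinh t)^m + (φ t)^2 * ((m : ℝ) * (sinh t)^(m-1) * cosh t)) t := by
    intro t
    have h1 : HasDerivAt (fun t => (φ t)^2) (2 * φ t * deriv φ t) t := by
      have := ((hφ.differentiable one_ne_zero t).hasDerivAt).fun_pow 2
      simpa [mul_comm, mul_assoc] using this
    have h2 : HasDerivAt (fun t => (sinh t)^m) ((m : ℝ) * (sinh t)^(m-1) * cosh t) t :=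
      (Real.hasDerivAt_sinh t).pow m
    simpa [mul_comm, mul_assoc, mul_left_comm] using h1.fun_mul h2
  -- F tends to 0 at infinity
  have hFsupp : HasCompactSupport (fun t => (φ t)^2 * (sinh t)^m) := hsq.mul_right
  have hFtop : Tendsto (fun t => (φ t)^2 * (sinh t)^m) atTop (nhds 0) := by
    obtain ⟨R, hR⟩ := (hFsupp.isCompact.bddAbove).imp (fun R h => h)
    refine tendsto_const_nhds.congr' ?_
    filter_upwards [eventually_gt_atTop R] with x hx
    by_contra h
    exact absurd (hR (subset_tsupport _ (fun hz => h hz.symm))) (not_le.mpr hx)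
  -- integration by parts: ∫ X + ∫ C = 0
  have hF0 : (fun t => (φ t)^2 * (sinh t)^m) 0 = 0 := by
    simp [Real.sinh_zero, zero_pow (by omega : m ≠ 0)]
  have hIBP : (∫ t in Ioi (0:ℝ), (2 * φ t * deriv φ t * (sinh t)^m
      + (φ t)^2 * ((m : ℝ) * (sinh t)^(m-1) * cosh t))) = 0 := by
    have := integral_Ioi_of_hasDerivAt_of_tendsto (a := 0)
      ((hφc.pow 2).mul (Real.continuous_sinh.pow m)).continuousWithinAt
      (fun x _ => hF x) ((hiX.add hiC).integrableOn) hFtop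
    simpa [Real.sinh_zero, zero_pow (by omega : m ≠ 0)] using this
  have hsplit : (∫ t in Ioi (0:ℝ), 2 * φ t * deriv φ t * (sinh t)^m)
      + (∫ t in Ioi (0:ℝ), (φ t)^2 * ((m : ℝ) * (sinh t)^(m-1) * cosh t)) = 0 := by
    rw [← integral_add hiX.integrableOn hiC.integrableOn]; exact hIBP
  set A := ∫ t in Ioi (0:ℝ), (φ t)^2 * (sinh t)^m with hA
  set B := ∫ t in Ioi (0:ℝ), (deriv φ t)^2 * (sinh t)^m with hB
  set C := ∫ t in Ioi (0:ℝ), (φ t)^2 * ((m : ℝ) * (sinh t)^(m-1) * cosh t) with hC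
  set X := ∫ t in Ioi (0:ℝ), 2 * φ t * deriv φ t * (sinh t)^m with hX
  -- step 2 : m * A ≤ C
  have h2 : (m : ℝ) * A ≤ C := by
    rw [hA, ← integral_const_mul]
    apply setIntegral_mono_on (hiA.integrableOn.const_mul _) hiC.integrableOn
      measurableSet_Ioi
    intro t ht
    have hs0 : 0 ≤ sinh t := Real.sinh_nonneg_iff.mpr (le_of_lt ht)
    have hsc : sinh t ≤ cosh t := by
      have := Real.cosh_sub_sinh t
      have := Real.exp_pos (-t)
      linarith
    have hpow : (sinh t)^m = (sinh t)^(m-1) * sinh t := by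
      rw [← pow_succ]; congr 1; omega
    have h1 : (sinh t)^(m-1) * sinh t ≤ (sinh t)^(m-1) * cosh t :=
      mul_le_mul_of_nonneg_left hsc (pow_nonneg hs0 _)
    calc (m : ℝ) * ((φ t)^2 * (sinh t)^m)
        = (φ t)^2 * ((m:ℝ) * ((sinh t)^(m-1) * sinh t)) := by rw [hpow]; ring
      _ ≤ (φ t)^2 * ((m:ℝ) * ((sinh t)^(m-1) * cosh t)) := by
          apply mul_le_mul_of_nonneg_left _ (sq_nonneg _)
          exact mul_le_mul_of_nonneg_left h1 (by positivity)
      _ = (φ t)^2 * ((m:ℝ) * (sinh t)^(m-1) * cosh t) := by ring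
  -- step 3 : -X ≤ (2/m) * B + (m/2) * A
  have h3 : -X ≤ (2/(m:ℝ)) * B + ((m:ℝ)/2) * A := by
    have hmpos : (0:ℝ) < (m:ℝ) := by linarith
    rw [hX, ← integral_neg, hB, hA, ← integral_const_mul, ← integral_const_mul,
      ← integral_add ((hiB.integrableOn).const_mul _) ((hiA.integrableOn).const_mul _)]
    apply setIntegral_mono_on hiX.integrableOn.neg
      (((hiB.integrableOn).const_mul _).add ((hiA.integrableOn).const_mul _))
      measurableSet_Ioi
    intro t ht
    have hs0 : (0:ℝ) ≤ (sinh t)^m := pow_nonneg (Real.sinh_nonneg_iff.mpr (le_of_lt ht)) _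
    have key : -(2 * φ t * deriv φ t) ≤ 2/(m:ℝ) * (deriv φ t)^2 + (m:ℝ)/2 * (φ t)^2 := by
      have expand : 2/(m:ℝ) * (deriv φ t)^2 + (m:ℝ)/2 * (φ t)^2 + 2*φ t*deriv φ t
          = ((2/(m:ℝ)) * deriv φ t + φ t)^2 * ((m:ℝ)/2) := by
        field_simp
        ring
      have hnn : 0 ≤ ((2/(m:ℝ)) * deriv φ t + φ t)^2 * ((m:ℝ)/2) :=
        mul_nonneg (sq_nonneg _) (by linarith)
      linarith
    calc -(2 * φ t * deriv φ t * (sinh t)^m)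
        = -(2 * φ t * deriv φ t) * (sinh t)^m := by ring
      _ ≤ (2/(m:ℝ) * (deriv φ t)^2 + (m:ℝ)/2 * (φ t)^2) * (sinh t)^m :=
          mul_le_mul_of_nonneg_right key hs0
      _ = 2/(m:ℝ) * ((deriv φ t)^2 * (sinh t)^m) + (m:ℝ)/2 * ((φ t)^2 * (sinh t)^m) := by ring
  -- combine
  have hCX : C = -X := by linarith
  have hfinal : (m:ℝ)^2 / 4 * A ≤ B := by
    have hmpos : (0:ℝ) < (m:ℝ) := by linarith
    have : (m:ℝ) * A ≤ (2/(m:ℝ)) * B + ((m:ℝ)/2) * A := by linarith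
    have h4 : ((m:ℝ)/2) * A ≤ (2/(m:ℝ)) * B := by linarith
    have h5 : (m:ℝ) * (((m:ℝ)/2) * A) ≤ (m:ℝ) * ((2/(m:ℝ)) * B) :=
      mul_le_mul_of_nonneg_left h4 (le_of_lt hmpos)
    have h6 : (m:ℝ) * ((2/(m:ℝ)) * B) = 2 * B := by field_simp
    nlinarith
  rw [hcast]
  exact hfinal
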